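/- arXiv:1908.07949 — 5 statements merged into one kernel-verified Lean document; each statement's English description precedes it below -/
import Mathlib

section
/- Let D ∈ ℝ^{m×m} and R ∈ ℝ^{p×p} be symmetric positive definite, L ∈ ℝ^{m×m} invertible, H ∈ ℝ^{p×m}. Then the symmetric matrix A₃ = [[D, 0, L], [0, R, H], [Lᵀ, Hᵀ, 0]] has exactly m + p positive eigenvalues and m negative eigenvalues (and no zero eigenvalues). -/
open Matrix

section Key

variable {n : Type*} [Fintype n] [DecidableEq n] {A : Matrix n n ℝ} (hA : A.IsHermitian)

/-- Quadratic form identity from the spectral theorem. -/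
lemma quad_eq_sum (x : n → ℝ) :
    x ⬝ᵥ A *ᵥ x = ∑ i, hA.eigenvalues i *
      ((star (hA.eigenvectorUnitary : Matrix n n ℝ) *ᵥ x) i) ^ 2 := by
  set U := (hA.eigenvectorUnitary : Matrix n n ℝ) with hU
  have hspec := hA.spectral_theorem
  have hco : (RCLike.ofReal ∘ hA.eigenvalues : n → ℝ) = hA.eigenvalues := by
    funext i; simp
  have h1 : A *ᵥ x = U *ᵥ (diagonal hA.eigenvalues *ᵥ (star U *ᵥ x)) := by
    rw [mulVec_mulVec, mulVec_mulVec]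
    conv_lhs => rw [hspec]
    rw [hco, Unitary.conjStarAlgAut_apply, Matrix.mul_assoc]
  rw [h1, dotProduct_mulVec]
  have h2 : x ᵥ* U = star U *ᵥ x := by
    have : star U = Uᵀ := by
      ext i j
      simp [Matrix.star_apply]
    rw [this, ← vecMul_transpose, transpose_transpose]
  rw [h2]
  simp only [mulVec_diagonal, dotProduct]
  exact Finset.sum_congr rfl fun i _ => by ring

lemma starU_mulVec_eq_zero {x : n → ℝ}
    (h : star (hA.eigenvectorUnitary : Matrix n n ℝ) *ᵥ x = 0) : x = 0 := by
  have hUU : (hA.eigenvectorUnitary : Matrix n n ℝ) * star (hA.eigenvectorUnitary : Matrix n n ℝ) = 1 :=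
    (Matrix.mem_unitaryGroup_iff).mp (hA.eigenvectorUnitary).2
  calc x = ((hA.eigenvectorUnitary : Matrix n n ℝ) * star (hA.eigenvectorUnitary : Matrix n n ℝ)) *ᵥ x := by
        rw [hUU, one_mulVec]
    _ = (hA.eigenvectorUnitary : Matrix n n ℝ) *ᵥ (star (hA.eigenvectorUnitary : Matrix n n ℝ) *ᵥ x) := by
        rw [mulVec_mulVec]
    _ = 0 := by rw [h, mulVec_zero]

theorem key_inertia {ι κ : Type*} [Fintype ι] [Fintype κ]
    (f : (ι → ℝ) →ₗ[ℝ] (n → ℝ)) (g : (κ → ℝ) →ₗ[ℝ] (n → ℝ))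
    (hf : ∀ u, u ≠ 0 → 0 < f u ⬝ᵥ A *ᵥ f u)
    (hg : ∀ z, z ≠ 0 → g z ⬝ᵥ A *ᵥ g z < 0)
    (hcard : Fintype.card ι + Fintype.card κ = Fintype.card n) :
    (Finset.univ.filter fun i => 0 < hA.eigenvalues i).card = Fintype.card ι ∧
    (Finset.univ.filter fun i => hA.eigenvalues i < 0).card = Fintype.card κ ∧
    ∀ i, hA.eigenvalues i ≠ 0 := by
  classical
  set U := (hA.eigenvectorUnitary : Matrix n n ℝ) with hU
  set P := Finset.univ.filter fun i => 0 < hA.eigenvalues i with hP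
  set N := Finset.univ.filter fun i => hA.eigenvalues i < 0 with hN
  -- positive count lower bound
  have hPle : Fintype.card ι ≤ P.card := by
    let F : (ι → ℝ) →ₗ[ℝ] ({i // i ∈ P} → ℝ) :=
      (LinearMap.funLeft ℝ ℝ Subtype.val).comp ((mulVecLin (star U)).comp f)
    have hFinj : Function.Injective F := by
      rw [injective_iff_map_eq_zero]
      intro u hu
      by_contra h
      have hQ := hf u h
      have hzero : ∀ i ∈ P, hA.eigenvalues i * ((star U *ᵥ f u) i) ^ 2 = 0 := by
        intro i hi
        have := congr_fun hu ⟨i, hi⟩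
        simp only [F, LinearMap.comp_apply, LinearMap.funLeft_apply, mulVecLin_apply,
          Pi.zero_apply] at this
        rw [this]
        ring
      have hle : f u ⬝ᵥ A *ᵥ f u ≤ 0 := by
        rw [quad_eq_sum hA]
        rw [← Finset.sum_filter_add_sum_filter_not Finset.univ
          (fun i => 0 < hA.eigenvalues i)]
        have h1 : ∑ i ∈ Finset.univ.filter (fun i => 0 < hA.eigenvalues i),
            hA.eigenvalues i * ((star U *ᵥ f u) i) ^ 2 = 0 :=
          Finset.sum_eq_zero fun i hi => hzero i hi
        rw [h1, zero_add]
        apply Finset.sum_nonpos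
        intro i hi
        simp only [Finset.mem_filter, not_lt] at hi
        exact mul_nonpos_of_nonpos_of_nonneg hi.2 (sq_nonneg _)
      linarith
    have := LinearMap.finrank_le_finrank_of_injective hFinj
    simpa [Module.finrank_fintype_fun_eq_card] using this
  -- negative count lower bound
  have hNle : Fintype.card κ ≤ N.card := by
    let G : (κ → ℝ) →ₗ[ℝ] ({i // i ∈ N} → ℝ) :=
      (LinearMap.funLeft ℝ ℝ Subtype.val).comp ((mulVecLin (star U)).comp g)
    have hGinj : Function.Injective G := by
      rw [injective_iff_map_eq_zero]
      intro z hz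
      by_contra h
      have hQ := hg z h
      have hzero : ∀ i ∈ N, hA.eigenvalues i * ((star U *ᵥ g z) i) ^ 2 = 0 := by
        intro i hi
        have := congr_fun hz ⟨i, hi⟩
        simp only [G, LinearMap.comp_apply, LinearMap.funLeft_apply, mulVecLin_apply,
          Pi.zero_apply] at this
        rw [this]
        ring
      have hle : 0 ≤ g z ⬝ᵥ A *ᵥ g z := by
        rw [quad_eq_sum hA]
        rw [← Finset.sum_filter_add_sum_filter_not Finset.univ
          (fun i => hA.eigenvalues i < 0)]
        have h1 : ∑ i ∈ Finset.univ.filter (fun i => hA.eigenvalues i < 0),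
            hA.eigenvalues i * ((star U *ᵥ g z) i) ^ 2 = 0 :=
          Finset.sum_eq_zero fun i hi => hzero i hi
        rw [h1, zero_add]
        apply Finset.sum_nonneg
        intro i hi
        simp only [Finset.mem_filter, not_lt] at hi
        exact mul_nonneg hi.2 (sq_nonneg _)
      linarith
    have := LinearMap.finrank_le_finrank_of_injective hGinj
    simpa [Module.finrank_fintype_fun_eq_card] using this
  have hdisj : Disjoint P N := by
    rw [Finset.disjoint_left]
    intro i hi1 hi2
    simp only [P, N, Finset.mem_filter] at hi1 hi2
    linarith [hi1.2, hi2.2]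
  have hunion : (P ∪ N).card = P.card + N.card := Finset.card_union_of_disjoint hdisj
  have hle : (P ∪ N).card ≤ Fintype.card n := by
    simpa using Finset.card_le_univ (P ∪ N)
  have hPcard : P.card = Fintype.card ι := by omega
  have hNcard : N.card = Fintype.card κ := by omega
  refine ⟨hPcard, hNcard, ?_⟩
  have huniv : P ∪ N = Finset.univ := by
    apply Finset.eq_univ_of_card
    omega
  intro i
  have : i ∈ P ∪ N := huniv ▸ Finset.mem_univ i
  rcases Finset.mem_union.mp this with h | h <;>
    simp only [P, N, Finset.mem_filter] at h
  · exact h.2.ne'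
  · exact h.2.ne

end Key

section Blocks

variable {m p : ℕ} (L : Matrix (Fin m) (Fin m) ℝ) (H : Matrix (Fin p) (Fin m) ℝ)

lemma B_mulVec (z : Fin m → ℝ) :
    (Matrix.of (Sum.elim L H)) *ᵥ z = Sum.elim (L *ᵥ z) (H *ᵥ z) := by
  funext i
  cases i <;> simp [mulVec, dotProduct] <;> rfl

lemma BH_mulVec (a : Fin m → ℝ) (b : Fin p → ℝ) :
    (Matrix.of (Sum.elim L H))ᴴ *ᵥ Sum.elim a b = Lᵀ *ᵥ a + Hᵀ *ᵥ b := by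
  funext j
  simp [mulVec, dotProduct, Fintype.sum_sum_type, conjTranspose_apply, transpose_apply,
    mul_comm, ← Matrix.fromRows.eq_1, fromRows_apply_inl, fromRows_apply_inr]

lemma BT_mulVec (a : Fin m → ℝ) (b : Fin p → ℝ) :
    (Matrix.of (Sum.elim L H))ᵀ *ᵥ Sum.elim a b = Lᵀ *ᵥ a + Hᵀ *ᵥ b := by
  funext j
  simp [mulVec, dotProduct, Fintype.sum_sum_type, transpose_apply, mul_comm, ← Matrix.fromRows.eq_1, fromRows_apply_inl, fromRows_apply_inr]

end Blocks

/-- Inertia of the 3×3-block saddle point matrix: if `D` and `R` are symmetric positive definite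
and `L` is invertible, then `A₃ = [[D, 0, L], [0, R, H], [Lᵀ, Hᵀ, 0]]` has exactly `m + p`
positive eigenvalues, `m` negative eigenvalues, and no zero eigenvalues. -/
theorem inertia_A3 {m p : ℕ} (D L : Matrix (Fin m) (Fin m) ℝ)
    (R : Matrix (Fin p) (Fin p) ℝ) (H : Matrix (Fin p) (Fin m) ℝ)
    (hD : D.PosDef) (hR : R.PosDef) (hL : IsUnit L)
    (A3 : Matrix ((Fin m ⊕ Fin p) ⊕ Fin m) ((Fin m ⊕ Fin p) ⊕ Fin m) ℝ)
    (hA3 : A3 = Matrix.fromBlocks (Matrix.fromBlocks D 0 0 R)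
      (Matrix.of (Sum.elim L H)) (Matrix.of (Sum.elim L H))ᴴ 0)
    (hA3herm : A3.IsHermitian) :
    (Finset.univ.filter fun i => 0 < hA3herm.eigenvalues i).card = m + p ∧
      (Finset.univ.filter fun i => hA3herm.eigenvalues i < 0).card = m ∧
      ∀ i, hA3herm.eigenvalues i ≠ 0 := by
  classical
  have hDdet : IsUnit D.det := (isUnit_iff_isUnit_det D).1 hD.isUnit
  have hRdet : IsUnit R.det := (isUnit_iff_isUnit_det R).1 hR.isUnit
  -- linear maps into the big space
  let f : ((Fin m ⊕ Fin p) → ℝ) →ₗ[ℝ] (((Fin m ⊕ Fin p) ⊕ Fin m) → ℝ) :=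
    { toFun := fun u => Sum.elim u 0
      map_add' := fun u v => by funext i; cases i <;> simp
      map_smul' := fun c u => by funext i; cases i <;> simp }
  let g : ((Fin m) → ℝ) →ₗ[ℝ] (((Fin m ⊕ Fin p) ⊕ Fin m) → ℝ) :=
    { toFun := fun z => Sum.elim (Sum.elim ((-(D⁻¹ * L)) *ᵥ z) ((-(R⁻¹ * H)) *ᵥ z)) z
      map_add' := fun u v => by funext i; rcases i with (i|i)|i <;> simp [mulVec_add]
      map_smul' := fun c u => by funext i; rcases i with (i|i)|i <;> simp [mulVec_smul] }
  have hf : ∀ u, u ≠ 0 → 0 < f u ⬝ᵥ A3 *ᵥ f u := by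
    intro u hu
    set u1 := u ∘ Sum.inl with hu1
    set u2 := u ∘ Sum.inr with hu2
    have hkey : f u ⬝ᵥ A3 *ᵥ f u = u1 ⬝ᵥ D *ᵥ u1 + u2 ⬝ᵥ R *ᵥ u2 := by
      show Sum.elim u 0 ⬝ᵥ A3 *ᵥ Sum.elim u 0 = _
      have hue : u = Sum.elim u1 u2 := (Sum.elim_comp_inl_inr u).symm
      rw [hA3, hue]
      simp [fromBlocks_mulVec, Sum.elim_comp_inl, Sum.elim_comp_inr,
        sumElim_dotProduct_sumElim]
    rw [hkey]
    have h1 : 0 ≤ u1 ⬝ᵥ D *ᵥ u1 := by simpa using hD.posSemidef.dotProduct_mulVec_nonneg u1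
    have h2 : 0 ≤ u2 ⬝ᵥ R *ᵥ u2 := by simpa using hR.posSemidef.dotProduct_mulVec_nonneg u2
    have : u1 ≠ 0 ∨ u2 ≠ 0 := by
      by_contra h
      push_neg at h
      apply hu
      funext i
      cases i with
      | inl i => exact congr_fun h.1 i
      | inr i => exact congr_fun h.2 i
    rcases this with h | h
    · have := hD.dotProduct_mulVec_pos h
      simp only [star_trivial] at this
      linarith
    · have := hR.dotProduct_mulVec_pos h
      simp only [star_trivial] at this
      linarith
  have hg : ∀ z, z ≠ 0 → g z ⬝ᵥ A3 *ᵥ g z < 0 := by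
    intro z hz
    set a := (-(D⁻¹ * L)) *ᵥ z with haa
    set b := (-(R⁻¹ * H)) *ᵥ z with hbb
    have ha : D *ᵥ a = -(L *ᵥ z) := by
      rw [haa, mulVec_mulVec, Matrix.mul_neg, ← Matrix.mul_assoc,
        Matrix.mul_nonsing_inv D hDdet, Matrix.one_mul, neg_mulVec]
    have hb : R *ᵥ b = -(H *ᵥ z) := by
      rw [hbb, mulVec_mulVec, Matrix.mul_neg, ← Matrix.mul_assoc,
        Matrix.mul_nonsing_inv R hRdet, Matrix.one_mul, neg_mulVec]
    have ha' : a = -(D⁻¹ *ᵥ (L *ᵥ z)) := by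
      rw [haa, neg_mulVec, mulVec_mulVec]
    have hb' : b = -(R⁻¹ *ᵥ (H *ᵥ z)) := by
      rw [hbb, neg_mulVec, mulVec_mulVec]
    have hmv : A3 *ᵥ Sum.elim (Sum.elim a b) z
        = Sum.elim (0 : (Fin m ⊕ Fin p) → ℝ) (Lᵀ *ᵥ a + Hᵀ *ᵥ b) := by
      rw [hA3]
      funext i
      rcases i with (i|i)|i <;>
        simp [fromBlocks_mulVec, Sum.elim_comp_inl, Sum.elim_comp_inr, B_mulVec, BH_mulVec, BT_mulVec,
          ha, hb]
    have hq : g z ⬝ᵥ A3 *ᵥ g z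
        = -((L *ᵥ z) ⬝ᵥ D⁻¹ *ᵥ (L *ᵥ z)) + -((H *ᵥ z) ⬝ᵥ R⁻¹ *ᵥ (H *ᵥ z)) := by
      show Sum.elim (Sum.elim a b) z ⬝ᵥ A3 *ᵥ Sum.elim (Sum.elim a b) z = _
      rw [hmv, sumElim_dotProduct_sumElim, dotProduct_zero,
        dotProduct_add, dotProduct_mulVec z Lᵀ a, dotProduct_mulVec z Hᵀ b,
        vecMul_transpose, vecMul_transpose, ha', hb']
      simp
    have hw : L *ᵥ z ≠ 0 := by
      intro h0
      exact hz ((Matrix.mulVec_injective_iff_isUnit.2 hL) (by simpa using h0))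
    have h1 : 0 < (L *ᵥ z) ⬝ᵥ D⁻¹ *ᵥ (L *ᵥ z) := by
      have := hD.inv.dotProduct_mulVec_pos hw
      simpa using this
    have h2 : 0 ≤ (H *ᵥ z) ⬝ᵥ R⁻¹ *ᵥ (H *ᵥ z) := by
      simpa using hR.inv.posSemidef.dotProduct_mulVec_nonneg (H *ᵥ z)
    rw [hq]
    linarith
  have hcard : Fintype.card (Fin m ⊕ Fin p) + Fintype.card (Fin m)
      = Fintype.card ((Fin m ⊕ Fin p) ⊕ Fin m) := by simp
  obtain ⟨h1, h2, h3⟩ := key_inertia hA3herm f g hf hg hcard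
  refine ⟨?_, ?_, h3⟩
  · rw [h1]; simp
  · rw [h2]; simp
end

section
/- Let C ∈ ℝ^{m×m} be symmetric positive definite and E ∈ ℝ^{m×n} (n ≤ m) have full column rank. Then every negative eigenvalue λ of the saddle point matrix A = [[C, E], [Eᵀ, 0]] satisfies (1/2)(μ_min − sqrt(μ_min² + 4σ_max²)) ≤ λ ≤ (1/2)(μ_max − sqrt(μ_max² + 4σ_min²)), where μ_min, μ_max are the extreme eigenvalues of C and σ_min, σ_max the extreme singular values of E. -/
set_option maxHeartbeats 1000000
open Matrix
open scoped RealInnerProductSpace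

lemma dot_self_nonneg {k : Type*} [Fintype k] (x : k → ℝ) : 0 ≤ x ⬝ᵥ x :=
  Finset.sum_nonneg fun j _ => mul_self_nonneg (x j)

lemma cs_dot {k : Type*} [Fintype k] (x w : k → ℝ) :
    (x ⬝ᵥ w) ^ 2 ≤ (x ⬝ᵥ x) * (w ⬝ᵥ w) := by
  simpa [dotProduct, sq] using Finset.sum_mul_sq_le_sq_mul_sq Finset.univ x w

lemma spectral_sums {k : Type*} [Fintype k] [DecidableEq k] {M : Matrix k k ℝ}
    (hM : M.IsHermitian) (x : k → ℝ) :
    ∃ c : k → ℝ,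
      (x ⬝ᵥ x = ∑ j, c j ^ 2) ∧
      (x ⬝ᵥ (M *ᵥ x) = ∑ j, hM.eigenvalues j * c j ^ 2) ∧
      ((M *ᵥ x) ⬝ᵥ (M *ᵥ x) = ∑ j, hM.eigenvalues j ^ 2 * c j ^ 2) := by
  classical
  set b := hM.eigenvectorBasis with hb
  have hinner : ∀ u w : EuclideanSpace ℝ k, ⟪u, w⟫ = (⇑u) ⬝ᵥ (⇑w) := by
    intro u w
    simp [PiLp.inner_apply, RCLike.inner_apply, dotProduct]
    exact Finset.sum_congr rfl fun _ _ => mul_comm _ _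
  have hMT : Mᵀ = M := by
    rw [← conjTranspose_eq_transpose_of_trivial, hM.eq]
  have hMb : ∀ (j : k) (w : k → ℝ),
      (⇑(b j)) ⬝ᵥ (M *ᵥ w) = hM.eigenvalues j * ((⇑(b j)) ⬝ᵥ w) := by
    intro j w
    rw [dotProduct_mulVec, ← mulVec_transpose, hMT, hM.mulVec_eigenvectorBasis j,
      smul_dotProduct]
    simp
    exact Or.inl rfl
  set xE : EuclideanSpace ℝ k := (WithLp.equiv 2 (k → ℝ)).symm x with hxE
  set MxE : EuclideanSpace ℝ k := (WithLp.equiv 2 (k → ℝ)).symm (M *ᵥ x) with hMxE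
  have hxEc : ⇑xE = x := rfl
  have hMxEc : ⇑MxE = M *ᵥ x := rfl
  set c : k → ℝ := fun j => ⟪(b j : EuclideanSpace ℝ k), xE⟫ with hc
  have key : ∀ u w : EuclideanSpace ℝ k, ⟪u, w⟫ = ∑ j, ⟪u, b j⟫ * ⟪b j, w⟫ :=
    fun u w => (b.sum_inner_mul_inner u w).symm
  have hcomm : ∀ j, ⟪xE, (b j : EuclideanSpace ℝ k)⟫ = c j := by
    intro j; rw [hc]; simp only [hinner, hxEc]; rw [dotProduct_comm]
  have hbMx : ∀ j, ⟪(b j : EuclideanSpace ℝ k), MxE⟫ = hM.eigenvalues j * c j := by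
    intro j
    rw [hinner, hMxEc, hMb j x, hc]; simp only [hinner, hxEc]
  have hMxb : ∀ j, ⟪MxE, (b j : EuclideanSpace ℝ k)⟫ = hM.eigenvalues j * c j := by
    intro j
    rw [real_inner_comm, hbMx]
  refine ⟨c, ?_, ?_, ?_⟩
  · have := key xE xE
    rw [hinner, hxEc] at this
    rw [this]
    exact Finset.sum_congr rfl fun j _ => by rw [hcomm, hc, sq]
  · have := key xE MxE
    rw [hinner, hxEc, hMxEc] at this
    rw [this]
    exact Finset.sum_congr rfl fun j _ => by rw [hcomm, hbMx]; ring
  · have := key MxE MxE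
    rw [hinner, hMxEc] at this
    rw [this]
    exact Finset.sum_congr rfl fun j _ => by rw [hMxb, hbMx]; ring

lemma quad_bounds {k : Type*} [Fintype k] [DecidableEq k] [Nonempty k] {M : Matrix k k ℝ}
    (hM : M.IsHermitian) (x : k → ℝ) :
    (⨅ j, hM.eigenvalues j) * (x ⬝ᵥ x) ≤ x ⬝ᵥ (M *ᵥ x) ∧
      x ⬝ᵥ (M *ᵥ x) ≤ (⨆ j, hM.eigenvalues j) * (x ⬝ᵥ x) := by
  obtain ⟨c, h1, h2, -⟩ := spectral_sums hM x
  have hbb : BddBelow (Set.range hM.eigenvalues) := (Set.finite_range _).bddBelow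
  have hba : BddAbove (Set.range hM.eigenvalues) := (Set.finite_range _).bddAbove
  constructor
  · rw [h1, h2, Finset.mul_sum]
    exact Finset.sum_le_sum fun j _ =>
      mul_le_mul_of_nonneg_right (ciInf_le hbb j) (sq_nonneg _)
  · rw [h1, h2, Finset.mul_sum]
    exact Finset.sum_le_sum fun j _ =>
      mul_le_mul_of_nonneg_right (le_ciSup hba j) (sq_nonneg _)

lemma sq_quad_le {k : Type*} [Fintype k] [DecidableEq k] {M : Matrix k k ℝ}
    (hM : M.IsHermitian) (x : k → ℝ) {s : ℝ}
    (h0 : ∀ j, 0 ≤ hM.eigenvalues j) (hs : ∀ j, hM.eigenvalues j ≤ s) :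
    (M *ᵥ x) ⬝ᵥ (M *ᵥ x) ≤ s * (x ⬝ᵥ (M *ᵥ x)) := by
  obtain ⟨c, -, h2, h3⟩ := spectral_sums hM x
  rw [h2, h3, Finset.mul_sum]
  refine Finset.sum_le_sum fun j _ => ?_
  nlinarith [mul_nonneg (mul_nonneg (sub_nonneg.2 (hs j)) (h0 j)) (sq_nonneg (c j))]

lemma eig_rayleigh {k : Type*} [Fintype k] [DecidableEq k] {M : Matrix k k ℝ}
    (hM : M.IsHermitian) (j : k) :
    ∃ w : k → ℝ, w ⬝ᵥ w = 1 ∧ hM.eigenvalues j = w ⬝ᵥ (M *ᵥ w) := by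
  refine ⟨hM.eigenvectorBasis j, ?_, ?_⟩
  · have h1 : ‖(hM.eigenvectorBasis j : EuclideanSpace ℝ k)‖ = 1 :=
      hM.eigenvectorBasis.orthonormal.1 j
    have h2 := real_inner_self_eq_norm_sq (hM.eigenvectorBasis j : EuclideanSpace ℝ k)
    rw [h1] at h2
    have h3 : ⟪(hM.eigenvectorBasis j : EuclideanSpace ℝ k), hM.eigenvectorBasis j⟫ =
        (hM.eigenvectorBasis j : k → ℝ) ⬝ᵥ (hM.eigenvectorBasis j : k → ℝ) := by
      simp only [PiLp.inner_apply, RCLike.inner_apply, conj_trivial, dotProduct]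
    rw [h3] at h2
    simpa using h2
  · have := hM.eigenvalues_eq j
    simpa using this

/-- Rusten–Winther bound on the negative eigenvalues of a saddle point matrix:
if `C` is SPD with extreme eigenvalues `μ_min, μ_max` and `E` (with `n ≤ m`) has full column
rank and extreme singular values `σ_min, σ_max`, then every negative eigenvalue `λ` of
`A = [[C, E], [Eᵀ, 0]]` satisfies
`(μ_min − sqrt(μ_min² + 4σ_max²))/2 ≤ λ ≤ (μ_max − sqrt(μ_max² + 4σ_min²))/2`. -/
theorem rusten_winther_neg {m n : ℕ} (hmn : n ≤ m)
    (C : Matrix (Fin m) (Fin m) ℝ) (E : Matrix (Fin m) (Fin n) ℝ)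
    (hC : C.PosDef) (hrank : E.rank = n)
    (hA : (Matrix.fromBlocks C E Eᴴ (0 : Matrix (Fin n) (Fin n) ℝ)).IsHermitian)
    (μmin μmax σmin σmax : ℝ)
    (hμmin : μmin = ⨅ i, hC.isHermitian.eigenvalues i)
    (hμmax : μmax = ⨆ i, hC.isHermitian.eigenvalues i)
    (hσmin : σmin = Real.sqrt (⨅ i, (isHermitian_conjTranspose_mul_self E).eigenvalues i))
    (hσmax : σmax = Real.sqrt (⨆ i, (isHermitian_conjTranspose_mul_self E).eigenvalues i)) :
    ∀ i, hA.eigenvalues i < 0 →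
      (μmin - Real.sqrt (μmin ^ 2 + 4 * σmax ^ 2)) / 2 ≤ hA.eigenvalues i ∧
        hA.eigenvalues i ≤ (μmax - Real.sqrt (μmax ^ 2 + 4 * σmin ^ 2)) / 2 := by
  intro i hneg
  classical
  set lam := hA.eigenvalues i with hlam
  set v : (Fin m ⊕ Fin n) → ℝ := ⇑(hA.eigenvectorBasis i) with hvdef
  have hveq : (Matrix.fromBlocks C E Eᴴ (0 : Matrix (Fin n) (Fin n) ℝ)) *ᵥ v = lam • v :=
    hA.mulVec_eigenvectorBasis i
  have hvne : v ≠ 0 := by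
    intro h
    exact hA.eigenvectorBasis.orthonormal.ne_zero i (by ext j; exact congrFun h j)
  set x : Fin m → ℝ := fun j => v (Sum.inl j) with hxdef
  set y : Fin n → ℝ := fun j => v (Sum.inr j) with hydef
  have hET : Eᴴ = Eᵀ := conjTranspose_eq_transpose_of_trivial E
  have hblock := fromBlocks_mulVec C E Eᴴ (0 : Matrix (Fin n) (Fin n) ℝ) v
  rw [hveq] at hblock
  have eq1 : C *ᵥ x + E *ᵥ y = lam • x := by
    funext j
    have := congrFun hblock.symm (Sum.inl j)
    simp at this ⊢; exact this
  have eq2 : Eᴴ *ᵥ x = lam • y := by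
    funext j
    have := congrFun hblock.symm (Sum.inr j)
    simp at this ⊢; exact this
  set a := x ⬝ᵥ x with ha
  set bb := y ⬝ᵥ y with hbb
  set p := x ⬝ᵥ (C *ᵥ x) with hp
  set q := x ⬝ᵥ (E *ᵥ y) with hq
  have hpq : p + q = lam * a := by
    have := congrArg (fun w => x ⬝ᵥ w) eq1
    simpa [dotProduct_add, dotProduct_smul, smul_eq_mul] using this
  have hqval : q = lam * bb := by
    rw [hq, dotProduct_mulVec, ← mulVec_transpose, ← hET, eq2, smul_dotProduct,
      smul_eq_mul, hbb]
  have hCpos : ∀ w : Fin m → ℝ, w ≠ 0 → 0 < w ⬝ᵥ (C *ᵥ w) := by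
    intro w hw
    simpa using hC.dotProduct_mulVec_pos hw
  have hyne : y ≠ 0 := by
    intro hy0
    have hx0 : x ≠ 0 := by
      intro hx0
      apply hvne
      funext j
      cases j with
      | inl j => exact congrFun hx0 j
      | inr j => exact congrFun hy0 j
    have h1 : C *ᵥ x = lam • x := by
      have := eq1
      rw [hy0, mulVec_zero, add_zero] at this
      exact this
    have h2 : p = lam * a := by
      rw [hp, h1, dotProduct_smul, smul_eq_mul, ha]
    have h3 := hCpos x hx0
    have h4 : lam * a ≤ 0 := mul_nonpos_of_nonpos_of_nonneg hneg.le (dot_self_nonneg x)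
    rw [← hp] at h3
    linarith
  have hbpos : 0 < bb := by
    rcases (dot_self_nonneg y).lt_or_eq with h | h
    · exact h
    · exact absurd (dotProduct_self_eq_zero.mp h.symm) hyne
  have hxne : x ≠ 0 := by
    intro hx0
    rw [hx0, mulVec_zero] at eq2
    exact hyne ((smul_eq_zero.mp eq2.symm).resolve_left hneg.ne)
  have hapos : 0 < a := by
    rcases (dot_self_nonneg x).lt_or_eq with h | h
    · exact h
    · exact absurd (dotProduct_self_eq_zero.mp h.symm) hxne
  have hnn : Nonempty (Fin n) := by
    obtain ⟨j, -⟩ := Function.ne_iff.mp hyne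
    exact ⟨j⟩
  have hnm : Nonempty (Fin m) := by
    obtain ⟨j⟩ := hnn
    exact Fin.pos_iff_nonempty.mp (lt_of_lt_of_le j.pos hmn)
  -- eigenvalue facts for C
  have hμlow : ∀ w : Fin m → ℝ, μmin * (w ⬝ᵥ w) ≤ w ⬝ᵥ (C *ᵥ w) := by
    intro w; rw [hμmin]; exact (quad_bounds hC.isHermitian w).1
  have hμhigh : ∀ w : Fin m → ℝ, w ⬝ᵥ (C *ᵥ w) ≤ μmax * (w ⬝ᵥ w) := by
    intro w; rw [hμmax]; exact (quad_bounds hC.isHermitian w).2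
  have hμminpos : 0 < μmin := by
    rw [hμmin]
    obtain ⟨j, hj⟩ := exists_eq_ciInf_of_finite (f := hC.isHermitian.eigenvalues)
    rw [← hj]
    exact hC.eigenvalues_pos j
  have hμmaxpos : 0 < μmax := by
    obtain ⟨j⟩ := hnm
    have h1 : μmin ≤ hC.isHermitian.eigenvalues j := by
      rw [hμmin]; exact ciInf_le ((Set.finite_range _).bddBelow) j
    have h2 : hC.isHermitian.eigenvalues j ≤ μmax := by
      rw [hμmax]; exact le_ciSup ((Set.finite_range _).bddAbove) j
    linarith
  -- singular value facts
  set S := ⨆ j, (isHermitian_conjTranspose_mul_self E).eigenvalues j with hSdef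
  set I := ⨅ j, (isHermitian_conjTranspose_mul_self E).eigenvalues j with hIdef
  have hInn : 0 ≤ I := by
    rw [hIdef]
    obtain ⟨j, hj⟩ := exists_eq_ciInf_of_finite
      (f := (isHermitian_conjTranspose_mul_self E).eigenvalues)
    rw [← hj]
    exact eigenvalues_conjTranspose_mul_self_nonneg E j
  have hSnn : 0 ≤ S := by
    obtain ⟨j⟩ := hnn
    have h2 : (isHermitian_conjTranspose_mul_self E).eigenvalues j ≤ S :=
      le_ciSup ((Set.finite_range _).bddAbove) j
    exact le_trans (eigenvalues_conjTranspose_mul_self_nonneg E j) h2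
  have hσmaxS : σmax ^ 2 = S := by rw [hσmax, Real.sq_sqrt hSnn]
  have hσminI : σmin ^ 2 = I := by rw [hσmin, Real.sq_sqrt hInn]
  have hEdot : ∀ z : Fin n → ℝ, (E *ᵥ z) ⬝ᵥ (E *ᵥ z) = z ⬝ᵥ ((Eᴴ * E) *ᵥ z) := by
    intro z
    rw [← mulVec_mulVec, hET, dotProduct_mulVec, ← mulVec_transpose]
    exact dotProduct_comm _ _
  -- lower bound
  have hzz : (Eᴴ *ᵥ x) ⬝ᵥ (Eᴴ *ᵥ x) = lam ^ 2 * bb := by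
    rw [eq2, smul_dotProduct, dotProduct_smul, smul_eq_mul, smul_eq_mul, hbb]; ring
  have hzx : (Eᴴ *ᵥ x) ⬝ᵥ (Eᴴ *ᵥ x) = x ⬝ᵥ (E *ᵥ (Eᴴ *ᵥ x)) := by
    nth_rewrite 1 [hET]
    rw [mulVec_transpose, ← dotProduct_mulVec]
  have hEz : ∀ z : Fin n → ℝ, z ⬝ᵥ ((Eᴴ * E) *ᵥ z) ≤ S * (z ⬝ᵥ z) :=
    fun z => (quad_bounds (isHermitian_conjTranspose_mul_self E) z).2
  have hEzlow : ∀ z : Fin n → ℝ, I * (z ⬝ᵥ z) ≤ z ⬝ᵥ ((Eᴴ * E) *ᵥ z) :=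
    fun z => (quad_bounds (isHermitian_conjTranspose_mul_self E) z).1
  have hzzpos : 0 < lam ^ 2 * bb := by rw [sq]; exact mul_pos (mul_pos_of_neg_of_neg hneg hneg) hbpos
  have hlow1 : lam ^ 2 * bb ≤ S * a := by
    set z := Eᴴ *ᵥ x with hz
    have h1 : (z ⬝ᵥ z) ^ 2 ≤ a * (S * (z ⬝ᵥ z)) := by
      calc (z ⬝ᵥ z) ^ 2 = (x ⬝ᵥ (E *ᵥ z)) ^ 2 := by rw [hzx]
        _ ≤ a * ((E *ᵥ z) ⬝ᵥ (E *ᵥ z)) := cs_dot x (E *ᵥ z)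
        _ = a * (z ⬝ᵥ ((Eᴴ * E) *ᵥ z)) := by rw [hEdot z]
        _ ≤ a * (S * (z ⬝ᵥ z)) := by
            exact mul_le_mul_of_nonneg_left (hEz z) hapos.le
    rw [hzz] at h1
    nlinarith [hzzpos, h1]
  have hpval : p = lam * a - lam * bb := by linarith [hpq, hqval]
  have key1 : lam ^ 2 ≤ lam * μmin + σmax ^ 2 := by
    have h1 : μmin * a ≤ p := by
      have := hμlow x; rw [← ha, ← hp] at this; exact this
    have h2 : lam * p ≤ lam * (μmin * a) :=
      mul_le_mul_of_nonpos_left h1 hneg.le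
    have h3 : lam ^ 2 * a = lam * p + lam ^ 2 * bb := by rw [hpval]; ring
    rw [hσmaxS]
    nlinarith [hlow1, hapos]
  have lower : (μmin - Real.sqrt (μmin ^ 2 + 4 * σmax ^ 2)) / 2 ≤ lam := by
    set s1 := Real.sqrt (μmin ^ 2 + 4 * σmax ^ 2) with hs1def
    have hs1nn : 0 ≤ s1 := Real.sqrt_nonneg _
    have hs1sq : s1 ^ 2 = μmin ^ 2 + 4 * σmax ^ 2 :=
      Real.sq_sqrt (by positivity)
    nlinarith [key1, hneg, hμminpos, hs1nn, hs1sq]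
  -- upper bound
  set M := C - lam • (1 : Matrix (Fin m) (Fin m) ℝ) with hMdef
  have hM : M.IsHermitian := by
    show Mᴴ = M
    rw [hMdef, conjTranspose_sub, conjTranspose_smul, conjTranspose_one, star_trivial,
      hC.isHermitian.eq]
  have hMmul : ∀ w : Fin m → ℝ, M *ᵥ w = C *ᵥ w - lam • w := by
    intro w
    rw [hMdef, sub_mulVec, smul_mulVec, one_mulVec]
  have hMeig : ∀ j, 0 ≤ hM.eigenvalues j ∧ hM.eigenvalues j ≤ μmax - lam := by
    intro j
    obtain ⟨w, hw1, hweq⟩ := eig_rayleigh hM j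
    have h1 : w ⬝ᵥ (M *ᵥ w) = w ⬝ᵥ (C *ᵥ w) - lam := by
      rw [hMmul, dotProduct_sub, dotProduct_smul, smul_eq_mul, hw1, mul_one]
    have h2 := hμlow w
    have h3 := hμhigh w
    rw [hw1, mul_one] at h2 h3
    constructor
    · rw [hweq, h1]; linarith
    · rw [hweq, h1]; linarith
  have hMx : M *ᵥ x = -(E *ᵥ y) := by
    rw [hMmul, ← eq1]; abel
  have hsq := sq_quad_le hM x (fun j => (hMeig j).1) (fun j => (hMeig j).2)
  have hL : (M *ᵥ x) ⬝ᵥ (M *ᵥ x) = (E *ᵥ y) ⬝ᵥ (E *ᵥ y) := by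
    rw [hMx, neg_dotProduct, dotProduct_neg, neg_neg]
  have hR : x ⬝ᵥ (M *ᵥ x) = -(lam * bb) := by
    rw [hMx, dotProduct_neg, ← hq, hqval]
  have key2 : σmin ^ 2 ≤ lam ^ 2 - μmax * lam := by
    have h1 : I * bb ≤ (E *ᵥ y) ⬝ᵥ (E *ᵥ y) := by
      have := hEzlow y; rw [← hbb] at this
      rw [hEdot y]; exact this
    have h2 : (E *ᵥ y) ⬝ᵥ (E *ᵥ y) ≤ (μmax - lam) * (-(lam * bb)) := by
      rw [← hL, ← hR]; exact hsq
    rw [hσminI]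
    nlinarith [hbpos]
  have upper : lam ≤ (μmax - Real.sqrt (μmax ^ 2 + 4 * σmin ^ 2)) / 2 := by
    set s2 := Real.sqrt (μmax ^ 2 + 4 * σmin ^ 2) with hs2def
    have hs2nn : 0 ≤ s2 := Real.sqrt_nonneg _
    have hs2sq : s2 ^ 2 = μmax ^ 2 + 4 * σmin ^ 2 :=
      Real.sq_sqrt (by positivity)
    nlinarith [key2, hneg, hμmaxpos, hs2nn, hs2sq]
  exact ⟨lower, upper⟩
end

section
/- Let C ∈ ℝ^{m×m} be symmetric positive definite and E ∈ ℝ^{m×n}. Then every positive eigenvalue λ of the saddle point matrix A = [[C, E], [Eᵀ, 0]] satisfies μ_min ≤ λ ≤ (1/2)(μ_max + sqrt(μ_max² + 4σ_max²)), where μ_min, μ_max are the extreme eigenvalues of C and σ_max the largest singular value of E. -/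
open Matrix

lemma rayleigh_bounds {ι : Type*} [Fintype ι] [DecidableEq ι] {M : Matrix ι ι ℝ}
    (hM : M.IsHermitian) (x : ι → ℝ) :
    (⨅ i, hM.eigenvalues i) * (x ⬝ᵥ x) ≤ x ⬝ᵥ (M *ᵥ x) ∧
      x ⬝ᵥ (M *ᵥ x) ≤ (⨆ i, hM.eigenvalues i) * (x ⬝ᵥ x) := by
  set U : Matrix ι ι ℝ := (hM.eigenvectorUnitary : Matrix ι ι ℝ) with hU
  set z : ι → ℝ := star U *ᵥ x with hz
  have hUU : U * star U = 1 := (Matrix.mem_unitaryGroup_iff).mp hM.eigenvectorUnitary.2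
  have hstar : star U = Uᵀ := by
    simp [Matrix.star_eq_conjTranspose, Matrix.conjTranspose]
    ext i j
    simp
  have hdot : ∀ w : ι → ℝ, x ⬝ᵥ (U *ᵥ w) = z ⬝ᵥ w := by
    intro w
    rw [Matrix.dotProduct_mulVec, hz, hstar]
    congr 1
    ext j
    simp [Matrix.vecMul, Matrix.mulVec, dotProduct, Matrix.transpose_apply, mul_comm]
  have hxMx : x ⬝ᵥ (M *ᵥ x) = ∑ i, hM.eigenvalues i * z i ^ 2 := by
    conv_lhs => rw [hM.spectral_theorem, Unitary.conjStarAlgAut_apply]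
    rw [← Matrix.mulVec_mulVec, ← Matrix.mulVec_mulVec, hdot]
    simp [dotProduct, Matrix.mulVec_diagonal, Function.comp]
    ring_nf
    exact Finset.sum_congr rfl fun i _ => by ring
  have hxx : x ⬝ᵥ x = ∑ i, z i ^ 2 := by
    have : x ⬝ᵥ (U *ᵥ (star U *ᵥ x)) = z ⬝ᵥ z := hdot _
    rw [Matrix.mulVec_mulVec, hUU, Matrix.one_mulVec] at this
    rw [this, hz]
    simp [dotProduct, sq]
  constructor
  · rw [hxMx, hxx, Finset.mul_sum]
    apply Finset.sum_le_sum
    intro i _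
    have : (⨅ j, hM.eigenvalues j) ≤ hM.eigenvalues i :=
      ciInf_le (Finite.bddBelow_range _) i
    nlinarith [sq_nonneg (z i)]
  · rw [hxMx, hxx, Finset.mul_sum]
    apply Finset.sum_le_sum
    intro i _
    have : hM.eigenvalues i ≤ ⨆ j, hM.eigenvalues j :=
      le_ciSup (Finite.bddAbove_range _) i
    nlinarith [sq_nonneg (z i)]

private lemma quad_key (l q D t : ℝ) (hl : 0 < l) (hD : 0 ≤ D) (hD2 : D ^ 2 = q ^ 2 + 4 * t)
    (ht : 0 ≤ t) (hq : l ^ 2 ≤ q * l + t) : l ≤ (q + D) / 2 := by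
  nlinarith [sq_nonneg (2 * l - q - D), sq_nonneg (2 * l - q + D), mul_nonneg hD hl.le]

/-- Rusten–Winther bound on the positive eigenvalues of a saddle point matrix:
if `C` is SPD with extreme eigenvalues `μ_min, μ_max` and `E` has largest singular value
`σ_max`, then every positive eigenvalue `λ` of `A = [[C, E], [Eᵀ, 0]]` satisfies
`μ_min ≤ λ ≤ (μ_max + sqrt(μ_max² + 4σ_max²))/2`. -/
theorem rusten_winther_pos {m n : ℕ}
    (C : Matrix (Fin m) (Fin m) ℝ) (E : Matrix (Fin m) (Fin n) ℝ) (hC : C.PosDef)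
    (hA : (Matrix.fromBlocks C E Eᴴ (0 : Matrix (Fin n) (Fin n) ℝ)).IsHermitian)
    (μmin μmax σmax : ℝ)
    (hμmin : μmin = ⨅ i, hC.isHermitian.eigenvalues i)
    (hμmax : μmax = ⨆ i, hC.isHermitian.eigenvalues i)
    (hσmax : σmax = Real.sqrt (⨆ i, (isHermitian_conjTranspose_mul_self E).eigenvalues i)) :
    ∀ i, 0 < hA.eigenvalues i →
      μmin ≤ hA.eigenvalues i ∧
        hA.eigenvalues i ≤ (μmax + Real.sqrt (μmax ^ 2 + 4 * σmax ^ 2)) / 2 := by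
  intro i hpos
  set lam := hA.eigenvalues i with hlam
  have hET : Eᴴ = Eᵀ := by ext i j; simp
  set x : Fin m → ℝ := fun j => hA.eigenvectorBasis i (Sum.inl j) with hx
  set y : Fin n → ℝ := fun j => hA.eigenvectorBasis i (Sum.inr j) with hy
  have hv : ⇑(hA.eigenvectorBasis i) = Sum.elim x y := by
    funext j; cases j <;> rfl
  have heig := hA.mulVec_eigenvectorBasis i
  rw [hv] at heig
  rw [Matrix.fromBlocks_mulVec] at heig
  have h1 : C *ᵥ x + E *ᵥ y = lam • x := by
    funext j; have := congrFun heig (Sum.inl j); rw [← hlam] at this; simpa using this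
  have h2 : Eᵀ *ᵥ x = lam • y := by
    funext j; have := congrFun heig (Sum.inr j)
    rw [← hlam] at this
    simpa [hET, Matrix.zero_mulVec] using this
  set a := x ⬝ᵥ x with ha
  set b := y ⬝ᵥ y with hb
  set c := x ⬝ᵥ (C *ᵥ x) with hc
  set e := x ⬝ᵥ (E *ᵥ y) with he
  have ha0 : 0 ≤ a := Finset.sum_nonneg fun _ _ => mul_self_nonneg _
  have hb0 : 0 ≤ b := Finset.sum_nonneg fun _ _ => mul_self_nonneg _
  have hce : c + e = lam * a := by
    have := congrArg (fun w => x ⬝ᵥ w) h1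
    simpa [dotProduct_add, dotProduct_smul, smul_eq_mul] using this
  have hEtx : y ⬝ᵥ (Eᵀ *ᵥ x) = e := by
    rw [Matrix.mulVec_transpose, dotProduct_comm, he, Matrix.dotProduct_mulVec]
  have heb : e = lam * b := by
    have := congrArg (fun w => y ⬝ᵥ w) h2
    simp only [dotProduct_smul, smul_eq_mul] at this
    rw [hEtx] at this; exact this
  -- a > 0
  have hapos : 0 < a := by
    rcases lt_or_eq_of_le ha0 with h | h
    · exact h
    have hx0 : x = 0 := by
      funext j
      have hsum : ∑ k, x k * x k = 0 := h.symm
      have := (Finset.sum_eq_zero_iff_of_nonneg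
        (fun k _ => mul_self_nonneg (x k))).mp hsum j (Finset.mem_univ j)
      exact mul_self_eq_zero.mp this
    have hy0 : y = 0 := by
      have : lam • y = 0 := by rw [← h2, hx0, Matrix.mulVec_zero]
      have := smul_eq_zero.mp this
      rcases this with h' | h'
      · exact absurd h' (ne_of_gt hpos)
      · exact h'
    have hall : ∀ j, (hA.eigenvectorBasis i) j = 0 := by
      intro j
      cases j with
      | inl j => exact (congrFun hv (Sum.inl j)).trans (by simp [hx0])
      | inr j => exact (congrFun hv (Sum.inr j)).trans (by simp [hy0])
    have hn : ‖hA.eigenvectorBasis i‖ = 1 := hA.eigenvectorBasis.orthonormal.1 i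
    rw [EuclideanSpace.norm_eq] at hn
    simp only [hall, norm_zero] at hn
    norm_num at hn
  have hray := rayleigh_bounds hC.isHermitian x
  constructor
  · -- lower bound
    have hmin : μmin * a ≤ c := by rw [hμmin]; exact hray.1
    nlinarith [mul_nonneg (le_of_lt hpos) hb0]
  · -- upper bound
    set s := ⨆ j, (isHermitian_conjTranspose_mul_self E).eigenvalues j with hs
    have hmaxc : c ≤ μmax * a := by rw [hμmax]; exact hray.2
    have hs0 : 0 ≤ s := by
      rcases isEmpty_or_nonempty (Fin n) with hemp | hne
      · simp [hs, Real.iSup_of_isEmpty]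
      · obtain ⟨j⟩ := hne
        calc (0:ℝ) ≤ (isHermitian_conjTranspose_mul_self E).eigenvalues j := by
              have hpsd : (Eᵀ * E).PosSemidef := by
                have := Matrix.posSemidef_conjTranspose_mul_self E
                rwa [hET] at this
              exact (Matrix.posSemidef_conjTranspose_mul_self E).eigenvalues_nonneg j
          _ ≤ s := le_ciSup (Finite.bddAbove_range _) j
    have hσ2 : σmax ^ 2 = s := by rw [hσmax, Real.sq_sqrt hs0]
    have hEy : (E *ᵥ y) ⬝ᵥ (E *ᵥ y) ≤ s * b := by
      have h := (rayleigh_bounds (isHermitian_conjTranspose_mul_self E) y).2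
      have heq : y ⬝ᵥ ((Eᴴ * E) *ᵥ y) = (E *ᵥ y) ⬝ᵥ (E *ᵥ y) := by
        rw [hET, ← Matrix.mulVec_mulVec]
        rw [Matrix.mulVec_transpose, dotProduct_comm, Matrix.dotProduct_mulVec]
      rw [heq] at h
      exact h
    have hCS : e ^ 2 ≤ a * ((E *ᵥ y) ⬝ᵥ (E *ᵥ y)) := by
      have h := Finset.sum_mul_sq_le_sq_mul_sq Finset.univ x (E *ᵥ y)
      have e1 : e = ∑ k, x k * (E *ᵥ y) k := rfl
      have e2 : a = ∑ k, x k ^ 2 :=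
        Finset.sum_congr rfl fun k _ => (pow_two (x k)).symm
      have e3 : (E *ᵥ y) ⬝ᵥ (E *ᵥ y) = ∑ k, (E *ᵥ y) k ^ 2 :=
        Finset.sum_congr rfl fun k _ => (pow_two ((E *ᵥ y) k)).symm
      rw [e1, e2, e3]
      exact h
    have hkey : lam ^ 2 * b ^ 2 ≤ a * (s * b) := by
      calc lam ^ 2 * b ^ 2 = e ^ 2 := by rw [heb]; ring
        _ ≤ a * ((E *ᵥ y) ⬝ᵥ (E *ᵥ y)) := hCS
        _ ≤ a * (s * b) := by
            exact mul_le_mul_of_nonneg_left hEy ha0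
    have hD0 : 0 ≤ Real.sqrt (μmax ^ 2 + 4 * σmax ^ 2) := Real.sqrt_nonneg _
    have hD2 : Real.sqrt (μmax ^ 2 + 4 * σmax ^ 2) ^ 2 = μmax ^ 2 + 4 * σmax ^ 2 :=
      Real.sq_sqrt (by nlinarith)
    have hσ2' : μmax ^ 2 + 4 * σmax ^ 2 = μmax ^ 2 + 4 * s := by rw [hσ2]
    rcases eq_or_lt_of_le hb0 with hbz | hbpos
    · -- b = 0
      have he0 : e = 0 := by rw [heb, ← hbz, mul_zero]
      have hla : lam * a ≤ μmax * a := by linarith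
      have hlm : lam ≤ μmax := le_of_mul_le_mul_right hla hapos
      have hq : lam ^ 2 ≤ μmax * lam + s := by
        have h' := mul_le_mul_of_nonneg_right hlm hpos.le
        rw [pow_two]; linarith
      exact quad_key lam μmax _ s hpos hD0 (by rw [hD2, hσ2']) hs0 hq
    · -- b > 0
      have h5 : lam ^ 2 * b ≤ s * a := by
        have h5' : (lam ^ 2 * b) * b ≤ (s * a) * b := by
          calc (lam ^ 2 * b) * b = lam ^ 2 * b ^ 2 := by ring
            _ ≤ a * (s * b) := hkey
            _ = (s * a) * b := by ring
        exact le_of_mul_le_mul_right h5' hbpos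
      have h6 : lam * a ≤ μmax * a + lam * b := by linarith
      have h7 : lam ^ 2 * a ≤ μmax * lam * a + lam ^ 2 * b := by
        have h7' := mul_le_mul_of_nonneg_left h6 hpos.le
        calc lam ^ 2 * a = lam * (lam * a) := by ring
          _ ≤ lam * (μmax * a + lam * b) := h7'
          _ = μmax * lam * a + lam ^ 2 * b := by ring
      have h8 : (lam ^ 2) * a ≤ (μmax * lam + s) * a := by
        have hr : (μmax * lam + s) * a = μmax * lam * a + s * a := by ring
        linarith
      have hq : lam ^ 2 ≤ μmax * lam + s := le_of_mul_le_mul_right h8 hapos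
      exact quad_key lam μmax _ s hpos hD0 (by rw [hD2, hσ2']) hs0 hq
end

section
/- With D, L, G as above (D SPD with extreme eigenvalues ψ_min, ψ_max; L with largest singular value σ_max; G = HᵀR^{-1}H PSD with largest eigenvalue ν_max), every negative eigenvalue ζ of A₂ = [[D, L], [Lᵀ, −G]] satisfies ζ ≥ (1/2)(ψ_min − ν_max − sqrt((ψ_min + ν_max)² + 4σ_max²)). -/
open Matrix

lemma sub_smul_one_posSemidef {n : Type*} [Fintype n] [DecidableEq n]
    {A : Matrix n n ℝ} (hA : A.IsHermitian) {c : ℝ} (hc : ∀ i, c ≤ hA.eigenvalues i) :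
    (A - c • 1).PosSemidef := by
  have h := hA.spectral_theorem
  set U := (hA.eigenvectorUnitary : Matrix n n ℝ) with hUdef
  have hU : U * star U = 1 := Matrix.mem_unitaryGroup_iff.mp hA.eigenvectorUnitary.2
  have key : A - c • 1 = U * diagonal (fun i => hA.eigenvalues i - c) * Uᴴ := by
    have : diagonal (fun i => hA.eigenvalues i - c)
        = diagonal (RCLike.ofReal ∘ hA.eigenvalues) - c • (1 : Matrix n n ℝ) := by
      ext i j
      by_cases hij : i = j <;>
        simp [Matrix.diagonal_apply, Matrix.one_apply, hij]
    rw [Unitary.conjStarAlgAut_apply] at h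
    rw [Matrix.star_eq_conjTranspose] at h hU
    rw [this, mul_sub, sub_mul, ← h]
    congr 1
    rw [Matrix.mul_smul, Matrix.smul_mul, mul_one, hU]
  rw [key]
  exact (posSemidef_diagonal_iff.mpr fun i => by simpa using hc i).mul_mul_conjTranspose_same U

lemma rayleigh_lower {n : Type*} [Fintype n] [DecidableEq n]
    {A : Matrix n n ℝ} (hA : A.IsHermitian) {c : ℝ} (hc : ∀ i, c ≤ hA.eigenvalues i)
    (x : n → ℝ) : c * (x ⬝ᵥ x) ≤ x ⬝ᵥ (A *ᵥ x) := by
  have h := (sub_smul_one_posSemidef hA hc).re_dotProduct_nonneg x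
  simp only [RCLike.re_to_real, star_trivial, sub_mulVec, smul_mulVec, one_mulVec,
    dotProduct_sub, dotProduct_smul, smul_eq_mul] at h
  linarith

lemma smul_one_sub_posSemidef {n : Type*} [Fintype n] [DecidableEq n]
    {A : Matrix n n ℝ} (hA : A.IsHermitian) {c : ℝ} (hc : ∀ i, hA.eigenvalues i ≤ c) :
    (c • 1 - A).PosSemidef := by
  have h := hA.spectral_theorem
  set U := (hA.eigenvectorUnitary : Matrix n n ℝ) with hUdef
  have hU : U * star U = 1 := Matrix.mem_unitaryGroup_iff.mp hA.eigenvectorUnitary.2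
  have key : c • 1 - A = U * diagonal (fun i => c - hA.eigenvalues i) * Uᴴ := by
    have : diagonal (fun i => c - hA.eigenvalues i)
        = c • (1 : Matrix n n ℝ) - diagonal (RCLike.ofReal ∘ hA.eigenvalues) := by
      ext i j
      by_cases hij : i = j <;>
        simp [Matrix.diagonal_apply, Matrix.one_apply, hij]
    rw [Unitary.conjStarAlgAut_apply] at h
    rw [Matrix.star_eq_conjTranspose] at h hU
    rw [this, mul_sub, sub_mul, ← h]
    congr 1
    rw [Matrix.mul_smul, Matrix.smul_mul, mul_one, hU]
  rw [key]
  exact (posSemidef_diagonal_iff.mpr fun i => by simpa using hc i).mul_mul_conjTranspose_same U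

lemma rayleigh_upper {n : Type*} [Fintype n] [DecidableEq n]
    {A : Matrix n n ℝ} (hA : A.IsHermitian) {c : ℝ} (hc : ∀ i, hA.eigenvalues i ≤ c)
    (x : n → ℝ) : x ⬝ᵥ (A *ᵥ x) ≤ c * (x ⬝ᵥ x) := by
  have h := (smul_one_sub_posSemidef hA hc).re_dotProduct_nonneg x
  simp only [RCLike.re_to_real, star_trivial, sub_mulVec, smul_mulVec, one_mulVec,
    dotProduct_sub, dotProduct_smul, smul_eq_mul] at h
  linarith

lemma cs_bound {n : Type*} [Fintype n] [DecidableEq n]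
    (L : Matrix n n ℝ) {S : ℝ} (hS : ∀ i, (isHermitian_conjTranspose_mul_self L).eigenvalues i ≤ S)
    (u v : n → ℝ) : (u ⬝ᵥ (L *ᵥ v)) ^ 2 ≤ S * (u ⬝ᵥ u) * (v ⬝ᵥ v) := by
  have h1 : (u ⬝ᵥ (L *ᵥ v)) ^ 2 ≤ (u ⬝ᵥ u) * ((L *ᵥ v) ⬝ᵥ (L *ᵥ v)) := by
    have := Finset.sum_mul_sq_le_sq_mul_sq Finset.univ u (L *ᵥ v)
    simpa [dotProduct, pow_two] using this
  have h2 : (L *ᵥ v) ⬝ᵥ (L *ᵥ v) = v ⬝ᵥ ((Lᵀ * L) *ᵥ v) := by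
    rw [← mulVec_mulVec, dotProduct_mulVec v, vecMul_transpose, dotProduct_comm]
  have h3 : v ⬝ᵥ ((Lᵀ * L) *ᵥ v) ≤ S * (v ⬝ᵥ v) :=
    by have := rayleigh_upper (isHermitian_conjTranspose_mul_self L) hS v
       rwa [conjTranspose_eq_transpose_of_trivial] at this
  have h4 : 0 ≤ u ⬝ᵥ u := Finset.sum_nonneg fun i _ => mul_self_nonneg _
  nlinarith [h1, h2, h3, h4, sq_nonneg (u ⬝ᵥ (L *ᵥ v))]

lemma key_scalar (ψ ν σ a b : ℝ) (hσ : 0 ≤ σ) (ha : 0 ≤ a) (hb : 0 ≤ b) :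
    (ψ - ν - Real.sqrt ((ψ + ν) ^ 2 + 4 * σ ^ 2)) / 2 * (a ^ 2 + b ^ 2) ≤
      ψ * a ^ 2 - 2 * σ * a * b - ν * b ^ 2 := by
  set s := Real.sqrt ((ψ + ν) ^ 2 + 4 * σ ^ 2) with hs
  have hs0 : 0 ≤ s := Real.sqrt_nonneg _
  have hs2 : s ^ 2 = (ψ + ν) ^ 2 + 4 * σ ^ 2 := Real.sq_sqrt (by positivity)
  have hP0 : 0 ≤ s * (a ^ 2 + b ^ 2) :=
    mul_nonneg hs0 (by positivity)
  have key : (s * (a ^ 2 + b ^ 2)) ^ 2 =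
      ((ψ + ν) * (b ^ 2 - a ^ 2) + 4 * σ * a * b) ^ 2 +
        ((ψ + ν) * (2 * a * b) - 2 * σ * (b ^ 2 - a ^ 2)) ^ 2 := by
    rw [mul_pow, hs2]; ring
  have hTP : (ψ + ν) * (b ^ 2 - a ^ 2) + 4 * σ * a * b ≤ s * (a ^ 2 + b ^ 2) := by
    rcases le_or_gt ((ψ + ν) * (b ^ 2 - a ^ 2) + 4 * σ * a * b) 0 with h | h
    · linarith
    · nlinarith [key, sq_nonneg ((ψ + ν) * (2 * a * b) - 2 * σ * (b ^ 2 - a ^ 2))]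
  linarith



/-- Lower bound for the negative eigenvalues of `A₂ = [[D, L], [Lᵀ, −G]]`, with `D` SPD
(extreme eigenvalues `ψ_min, ψ_max`), `L` with largest singular value `σ_max`, and `G` PSD with
largest eigenvalue `ν_max`: every negative eigenvalue `ζ` satisfies
`ζ ≥ (ψ_min − ν_max − sqrt((ψ_min + ν_max)² + 4σ_max²))/2`. -/
theorem A2_neg_eig_lower_bound {m : ℕ}
    (D L G : Matrix (Fin m) (Fin m) ℝ) (hD : D.PosDef) (hG : G.PosSemidef)
    (hA2 : (Matrix.fromBlocks D L Lᴴ (-G)).IsHermitian)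
    (ψmin νmax σmax : ℝ)
    (hψmin : ψmin = ⨅ i, hD.isHermitian.eigenvalues i)
    (hνmax : νmax = ⨆ i, hG.isHermitian.eigenvalues i)
    (hσmax : σmax = Real.sqrt (⨆ i, (isHermitian_conjTranspose_mul_self L).eigenvalues i)) :
    ∀ i, hA2.eigenvalues i < 0 →
      (ψmin - νmax - Real.sqrt ((ψmin + νmax) ^ 2 + 4 * σmax ^ 2)) / 2 ≤
        hA2.eigenvalues i := by
  intro i _
  have hne : Nonempty (Fin m) := ⟨i.elim id id⟩
  set ζ := hA2.eigenvalues i with hζ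
  set w : (Fin m ⊕ Fin m) → ℝ := ⇑(hA2.eigenvectorBasis i) with hwdef
  have hwvec : (Matrix.fromBlocks D L Lᴴ (-G)) *ᵥ w = ζ • w := hA2.mulVec_eigenvectorBasis i
  have hwne : w ≠ 0 := by
    intro h
    exact hA2.eigenvectorBasis.orthonormal.ne_zero i (by ext j; exact congrFun h j)
  set u : Fin m → ℝ := fun j => w (Sum.inl j) with hu
  set v : Fin m → ℝ := fun j => w (Sum.inr j) with hv
  have hw' : w = Sum.elim u v := by funext j; cases j <;> rfl
  -- quadratic form identity
  have hLT : v ⬝ᵥ (Lᴴ *ᵥ u) = u ⬝ᵥ (L *ᵥ v) := by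
    rw [conjTranspose_eq_transpose_of_trivial, dotProduct_mulVec, vecMul_transpose,
      dotProduct_comm]
  have hquad : ζ * (u ⬝ᵥ u + v ⬝ᵥ v)
      = u ⬝ᵥ (D *ᵥ u) + 2 * (u ⬝ᵥ (L *ᵥ v)) - v ⬝ᵥ (G *ᵥ v) := by
    have h1 : w ⬝ᵥ ((Matrix.fromBlocks D L Lᴴ (-G)) *ᵥ w) = ζ * (u ⬝ᵥ u + v ⬝ᵥ v) := by
      rw [hwvec, hw', dotProduct_smul, sumElim_dotProduct_sumElim, smul_eq_mul]
    rw [← h1, hw', fromBlocks_mulVec, sumElim_dotProduct_sumElim, dotProduct_add,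
      dotProduct_add]
    simp only [Sum.elim_comp_inl, Sum.elim_comp_inr]
    rw [hLT, neg_mulVec, dotProduct_neg]
    ring
  -- positivity of the norm
  have hp : 0 ≤ u ⬝ᵥ u := Finset.sum_nonneg fun j _ => mul_self_nonneg _
  have hq : 0 ≤ v ⬝ᵥ v := Finset.sum_nonneg fun j _ => mul_self_nonneg _
  have hpq : 0 < u ⬝ᵥ u + v ⬝ᵥ v := by
    obtain ⟨j, hj⟩ := Function.ne_iff.mp hwne
    have : 0 < w ⬝ᵥ w := by
      refine Finset.sum_pos' (fun k _ => mul_self_nonneg _) ⟨j, Finset.mem_univ j, ?_⟩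
      exact mul_self_pos.mpr hj
    rwa [hw', sumElim_dotProduct_sumElim] at this
  -- eigenvalue bounds
  have hψ : ∀ j, ψmin ≤ hD.isHermitian.eigenvalues j := fun j =>
    hψmin ▸ ciInf_le (Finite.bddBelow_range _) j
  have hν : ∀ j, hG.isHermitian.eigenvalues j ≤ νmax := fun j =>
    hνmax ▸ le_ciSup (Finite.bddAbove_range _) j
  have hSle : ∀ j, (isHermitian_conjTranspose_mul_self L).eigenvalues j ≤
      ⨆ j, (isHermitian_conjTranspose_mul_self L).eigenvalues j := fun j =>
    le_ciSup (Finite.bddAbove_range _) j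
  have hLpsd : (Lᵀ * L).PosSemidef := by
    rw [← conjTranspose_eq_transpose_of_trivial]
    exact posSemidef_conjTranspose_mul_self L
  have hS0 : 0 ≤ ⨆ j, (isHermitian_conjTranspose_mul_self L).eigenvalues j :=
    le_trans ((posSemidef_conjTranspose_mul_self L).eigenvalues_nonneg (Classical.arbitrary (Fin m))) (hSle _)
  have hσ0 : 0 ≤ σmax := hσmax ▸ Real.sqrt_nonneg _
  have hσ2 : σmax ^ 2 = ⨆ j, (isHermitian_conjTranspose_mul_self L).eigenvalues j := by
    rw [hσmax, Real.sq_sqrt hS0]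
  -- bounds on the three terms
  have hDb : ψmin * (u ⬝ᵥ u) ≤ u ⬝ᵥ (D *ᵥ u) := rayleigh_lower hD.isHermitian hψ u
  have hGb : v ⬝ᵥ (G *ᵥ v) ≤ νmax * (v ⬝ᵥ v) := rayleigh_upper hG.isHermitian hν v
  have hL2 : (u ⬝ᵥ (L *ᵥ v)) ^ 2 ≤ σmax ^ 2 * (u ⬝ᵥ u) * (v ⬝ᵥ v) := by
    rw [hσ2]; exact cs_bound L hSle u v
  -- introduce a := sqrt p, b := sqrt q
  set a := Real.sqrt (u ⬝ᵥ u) with ha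
  set b := Real.sqrt (v ⬝ᵥ v) with hb
  have ha2 : a ^ 2 = u ⬝ᵥ u := Real.sq_sqrt hp
  have hb2 : b ^ 2 = v ⬝ᵥ v := Real.sq_sqrt hq
  have ha0 : 0 ≤ a := Real.sqrt_nonneg _
  have hb0 : 0 ≤ b := Real.sqrt_nonneg _
  have hcs : -(σmax * a * b) ≤ u ⬝ᵥ (L *ᵥ v) := by
    have habs : |u ⬝ᵥ (L *ᵥ v)| ≤ σmax * a * b := by
      have h1 : (u ⬝ᵥ (L *ᵥ v)) ^ 2 ≤ (σmax * a * b) ^ 2 := by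
        rw [mul_pow, mul_pow, ha2, hb2]; linarith [hL2]
      calc |u ⬝ᵥ (L *ᵥ v)| = Real.sqrt ((u ⬝ᵥ (L *ᵥ v)) ^ 2) := (Real.sqrt_sq_eq_abs _).symm
        _ ≤ Real.sqrt ((σmax * a * b) ^ 2) := Real.sqrt_le_sqrt h1
        _ = σmax * a * b := Real.sqrt_sq (by positivity)
    linarith [neg_abs_le (u ⬝ᵥ (L *ᵥ v))]
  -- combine
  have hfinal : (ψmin - νmax - Real.sqrt ((ψmin + νmax) ^ 2 + 4 * σmax ^ 2)) / 2 *
      (u ⬝ᵥ u + v ⬝ᵥ v) ≤ ζ * (u ⬝ᵥ u + v ⬝ᵥ v) := by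
    have hk := key_scalar ψmin νmax σmax a b hσ0 ha0 hb0
    rw [ha2, hb2] at hk
    rw [hquad]
    nlinarith [hk, hDb, hGb, hcs]
  exact le_of_mul_le_mul_right (by linarith [hfinal]) hpq
end

section
/- Let D ∈ ℝ^{m×m} be symmetric positive definite with largest eigenvalue ψ_max, let L ∈ ℝ^{m×m}, H ∈ ℝ^{p×m}, and R ∈ ℝ^{p×p} symmetric positive definite with largest eigenvalue ρ_max. Let θ_min be the smallest singular value of the stacked matrix (Lᵀ Hᵀ). Then every negative eigenvalue ζ of A₂ = [[D, L], [Lᵀ, −HᵀR^{-1}H]] satisfies ζ ≤ max{ −θ_min²/ρ_max, (1/2)(ψ_max − sqrt(ψ_max² + 4θ_min²)) }. -/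
open Matrix

section helpers

variable {n : Type*} [Fintype n] [DecidableEq n]

lemma unit_dot' (U : Matrix n n ℝ) (hU : U ∈ Matrix.unitaryGroup n ℝ) (a b : n → ℝ) :
    (U *ᵥ a) ⬝ᵥ (U *ᵥ b) = a ⬝ᵥ b := by
  rw [dotProduct_mulVec, ← mulVec_transpose, mulVec_mulVec]
  have : Uᵀ * U = 1 := by
    have := (Matrix.mem_unitaryGroup_iff').mp hU
    simpa [star, conjTranspose] using this
  rw [this, one_mulVec]

lemma spectral_repr' (A : Matrix n n ℝ) (hA : A.IsHermitian) (x : n → ℝ) :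
    ∃ y : n → ℝ, x ⬝ᵥ x = ∑ i, y i ^ 2 ∧
      x ⬝ᵥ A *ᵥ x = ∑ i, hA.eigenvalues i * y i ^ 2 ∧
      (A *ᵥ x) ⬝ᵥ (A *ᵥ x) = ∑ i, hA.eigenvalues i ^ 2 * y i ^ 2 := by
  set U : Matrix n n ℝ := (hA.eigenvectorUnitary : Matrix n n ℝ) with hUdef
  have hU : U ∈ Matrix.unitaryGroup n ℝ := hA.eigenvectorUnitary.2
  set y : n → ℝ := star U *ᵥ x with hy
  have hUy : U *ᵥ y = x := by
    rw [hy, mulVec_mulVec, (Matrix.mem_unitaryGroup_iff).mp hU, one_mulVec]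
  have hsp : A = U * diagonal hA.eigenvalues * star U := by
    have := hA.spectral_theorem
    simpa [hUdef] using this
  have hAx : A *ᵥ x = U *ᵥ (fun i => hA.eigenvalues i * y i) := by
    have hdiag : diagonal hA.eigenvalues *ᵥ y = fun i => hA.eigenvalues i * y i := by
      ext i; simp [mulVec_diagonal]
    conv_lhs => rw [hsp]
    rw [← mulVec_mulVec, ← mulVec_mulVec, ← hy, hdiag]
  refine ⟨y, ?_, ?_, ?_⟩
  · rw [← hUy, unit_dot' U hU]
    simp [dotProduct, pow_two]
  · rw [hAx, ← hUy, unit_dot' U hU]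
    simp only [dotProduct]
    exact Finset.sum_congr rfl fun i _ => by ring
  · rw [hAx, unit_dot' U hU]
    simp only [dotProduct]
    exact Finset.sum_congr rfl fun i _ => by ring

/-- `‖A x‖² ≤ c ⟨x, A x⟩` when eigenvalues of `A` lie in `[0, c]`. -/
lemma sq_mulVec_le (A : Matrix n n ℝ) (hA : A.IsHermitian) (c : ℝ)
    (h1 : ∀ i, 0 ≤ hA.eigenvalues i) (h2 : ∀ i, hA.eigenvalues i ≤ c) (x : n → ℝ) :
    (A *ᵥ x) ⬝ᵥ (A *ᵥ x) ≤ c * (x ⬝ᵥ A *ᵥ x) := by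
  obtain ⟨y, _, h3, h4⟩ := spectral_repr' A hA x
  rw [h3, h4, Finset.mul_sum]
  refine Finset.sum_le_sum fun i _ => ?_
  nlinarith [mul_nonneg (mul_nonneg (sub_nonneg.2 (h2 i)) (h1 i)) (sq_nonneg (y i))]

lemma rayleigh_le_sup [Nonempty n] (A : Matrix n n ℝ) (hA : A.IsHermitian) (x : n → ℝ) :
    x ⬝ᵥ A *ᵥ x ≤ (⨆ i, hA.eigenvalues i) * (x ⬝ᵥ x) := by
  obtain ⟨y, h1, h2, _⟩ := spectral_repr' A hA x
  rw [h1, h2, Finset.mul_sum]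
  refine Finset.sum_le_sum fun i _ => ?_
  exact mul_le_mul_of_nonneg_right
    (le_ciSup (Set.finite_range hA.eigenvalues).bddAbove i) (sq_nonneg _)

lemma inf_le_rayleigh [Nonempty n] (A : Matrix n n ℝ) (hA : A.IsHermitian) (x : n → ℝ) :
    (⨅ i, hA.eigenvalues i) * (x ⬝ᵥ x) ≤ x ⬝ᵥ A *ᵥ x := by
  obtain ⟨y, h1, h2, _⟩ := spectral_repr' A hA x
  rw [h1, h2, Finset.mul_sum]
  refine Finset.sum_le_sum fun i _ => ?_
  exact mul_le_mul_of_nonneg_right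
    (ciInf_le (Set.finite_range hA.eigenvalues).bddBelow i) (sq_nonneg _)

lemma eig_le_of_rayleigh (A : Matrix n n ℝ) (hA : A.IsHermitian) (c : ℝ)
    (h : ∀ x : n → ℝ, x ⬝ᵥ A *ᵥ x ≤ c * (x ⬝ᵥ x)) (j : n) : hA.eigenvalues j ≤ c := by
  set b : n → ℝ := ⇑(hA.eigenvectorBasis j) with hb
  have hbe : A *ᵥ b = hA.eigenvalues j • b := hA.mulVec_eigenvectorBasis j
  have hbne : b ≠ 0 := by
    intro h0
    have : hA.eigenvectorBasis j ≠ 0 := hA.eigenvectorBasis.orthonormal.ne_zero j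
    exact this (by ext k; exact congrFun h0 k)
  have hbb : 0 < b ⬝ᵥ b := by
    rcases lt_or_eq_of_le (Finset.sum_nonneg fun i _ => mul_self_nonneg (b i)) with h' | h'
    · exact h'
    · exact absurd (dotProduct_self_eq_zero.mp h'.symm) hbne
  have := h b
  rw [hbe, dotProduct_smul, smul_eq_mul] at this
  nlinarith

end helpers

lemma final_combine (ζ ψ ρ θ2 a q nv lv hv : ℝ) (hζ : ζ < 0) (hψζ : 0 < ψ - ζ)
    (ha0 : 0 ≤ a) (hq0 : 0 ≤ q) (hnvpos : 0 < nv)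
    (hE2 : a + q = -(ζ * nv)) (hB1 : lv ≤ (ψ - ζ) * a) (hB2 : hv ≤ ρ * q)
    (hB3 : θ2 * nv ≤ lv + hv) :
    ζ ≤ max (-(θ2 / ρ)) ((ψ - Real.sqrt (ψ ^ 2 + 4 * θ2)) / 2) := by
  rcases le_or_gt ρ (ψ - ζ) with hc | hc
  · have h1 : θ2 ≤ (-ζ) * (ψ - ζ) := by
      have key : θ2 * nv ≤ ((-ζ) * (ψ - ζ)) * nv := by
        calc θ2 * nv ≤ lv + hv := hB3
          _ ≤ (ψ - ζ) * a + ρ * q := by linarith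
          _ ≤ (ψ - ζ) * a + (ψ - ζ) * q := by
              have := mul_le_mul_of_nonneg_right hc hq0
              linarith
          _ = (ψ - ζ) * (a + q) := by ring
          _ = (ψ - ζ) * (-(ζ * nv)) := by rw [hE2]
          _ = ((-ζ) * (ψ - ζ)) * nv := by ring
      exact le_of_mul_le_mul_right key hnvpos
    refine le_max_of_le_right ?_
    have hs : Real.sqrt (ψ ^ 2 + 4 * θ2) ≤ ψ - 2 * ζ := by
      have h2 : ψ ^ 2 + 4 * θ2 ≤ (ψ - 2 * ζ) ^ 2 := by nlinarith
      calc Real.sqrt (ψ ^ 2 + 4 * θ2) ≤ Real.sqrt ((ψ - 2 * ζ) ^ 2) :=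
            Real.sqrt_le_sqrt h2
        _ = ψ - 2 * ζ := Real.sqrt_sq (by linarith)
    linarith
  · have hρpos : 0 < ρ := lt_trans hψζ hc
    have h1 : θ2 ≤ (-ζ) * ρ := by
      have key : θ2 * nv ≤ ((-ζ) * ρ) * nv := by
        calc θ2 * nv ≤ lv + hv := hB3
          _ ≤ (ψ - ζ) * a + ρ * q := by linarith
          _ ≤ ρ * a + ρ * q := by
              have := mul_le_mul_of_nonneg_right hc.le ha0
              linarith
          _ = ρ * (a + q) := by ring
          _ = ρ * (-(ζ * nv)) := by rw [hE2]
          _ = ((-ζ) * ρ) * nv := by ring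
      exact le_of_mul_le_mul_right key hnvpos
    refine le_max_of_le_left ?_
    have h2 : θ2 / ρ ≤ -ζ := (div_le_iff₀ hρpos).mpr (by nlinarith)
    linarith

/-- Upper bound for the negative eigenvalues of `A₂ = [[D, L], [Lᵀ, −HᵀR⁻¹H]]`: with `D` SPD
(largest eigenvalue `ψ_max`), `R` SPD (largest eigenvalue `ρ_max`) and `θ_min` the smallest
singular value of the stacked matrix `(Lᵀ Hᵀ)`, every negative eigenvalue `ζ` satisfies
`ζ ≤ max { −θ_min²/ρ_max, (ψ_max − sqrt(ψ_max² + 4θ_min²))/2 }`. -/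
theorem A2_neg_eig_upper_bound {m p : ℕ}
    (D L : Matrix (Fin m) (Fin m) ℝ) (H : Matrix (Fin p) (Fin m) ℝ)
    (R : Matrix (Fin p) (Fin p) ℝ) (hD : D.PosDef) (hR : R.PosDef)
    (hA2 : (Matrix.fromBlocks D L Lᴴ (-(Hᴴ * R⁻¹ * H))).IsHermitian)
    (ψmax ρmax θmin : ℝ)
    (hψmax : ψmax = ⨆ i, hD.isHermitian.eigenvalues i)
    (hρmax : ρmax = ⨆ i, hR.isHermitian.eigenvalues i)
    (hθmin : θmin = Real.sqrt (⨅ i, ((isHermitian_conjTranspose_mul_self L).add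
        (isHermitian_conjTranspose_mul_self H)).eigenvalues i)) :
    ∀ i, hA2.eigenvalues i < 0 →
      hA2.eigenvalues i ≤
        max (-(θmin ^ 2 / ρmax)) ((ψmax - Real.sqrt (ψmax ^ 2 + 4 * θmin ^ 2)) / 2) := by
  intro i hζ
  rcases Nat.eq_zero_or_pos m with hm | hm
  · subst hm; exact (i.elim Fin.elim0 Fin.elim0)
  haveI : Nonempty (Fin m) := ⟨⟨0, hm⟩⟩
  set ζ := hA2.eigenvalues i with hζdef
  -- the eigenvector
  set x : (Fin m ⊕ Fin m) → ℝ := ⇑(hA2.eigenvectorBasis i) with hxdef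
  have hx : (Matrix.fromBlocks D L Lᴴ (-(Hᴴ * R⁻¹ * H))) *ᵥ x = ζ • x :=
    hA2.mulVec_eigenvectorBasis i
  have hxne : x ≠ 0 := by
    intro h0
    have hne : hA2.eigenvectorBasis i ≠ 0 := hA2.eigenvectorBasis.orthonormal.ne_zero i
    exact hne (by ext k; exact congrFun h0 k)
  set u : Fin m → ℝ := fun j => x (Sum.inl j) with hu
  set v : Fin m → ℝ := fun j => x (Sum.inr j) with hv
  have hxe : x = Sum.elim u v := by ext j; cases j <;> rfl
  rw [hxe, fromBlocks_mulVec] at hx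
  have hLH : Lᴴ = Lᵀ := conjTranspose_eq_transpose_of_trivial L
  have hHH : Hᴴ = Hᵀ := conjTranspose_eq_transpose_of_trivial H
  rw [hLH, hHH] at hx
  have eq1 : D *ᵥ u + L *ᵥ v = ζ • u := by
    ext j; have := congrFun hx (Sum.inl j); simpa using this
  have eq2 : Lᵀ *ᵥ u - (Hᵀ * R⁻¹ * H) *ᵥ v = ζ • v := by
    ext j; have := congrFun hx (Sum.inr j)
    simpa [neg_mulVec, sub_eq_add_neg] using this
  -- scalar quantities
  set nu : ℝ := u ⬝ᵥ u with hnu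
  set nv : ℝ := v ⬝ᵥ v with hnv
  set a : ℝ := u ⬝ᵥ (D *ᵥ u) - ζ * nu with ha
  set q : ℝ := v ⬝ᵥ ((Hᵀ * R⁻¹ * H) *ᵥ v) with hq
  set lv : ℝ := (L *ᵥ v) ⬝ᵥ (L *ᵥ v) with hlv
  set hvv : ℝ := (H *ᵥ v) ⬝ᵥ (H *ᵥ v) with hhv
  have hnu0 : (0:ℝ) ≤ nu := Finset.sum_nonneg fun j _ => mul_self_nonneg _
  have hnv0 : (0:ℝ) ≤ nv := Finset.sum_nonneg fun j _ => mul_self_nonneg _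
  have hE1 : u ⬝ᵥ (L *ᵥ v) = -a := by
    have h := congrArg (fun w => u ⬝ᵥ w) eq1
    simp only [dotProduct_add, dotProduct_smul, smul_eq_mul] at h
    rw [ha]; rw [← hnu] at h; linarith
  have hsymm : v ⬝ᵥ (Lᵀ *ᵥ u) = u ⬝ᵥ (L *ᵥ v) := by
    rw [dotProduct_mulVec, vecMul_transpose, dotProduct_comm]
  have hE2 : a + q = -(ζ * nv) := by
    have h := congrArg (fun w => v ⬝ᵥ w) eq2
    simp only [dotProduct_sub, dotProduct_smul, smul_eq_mul] at h
    rw [hsymm, hE1, ← hnv] at h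
    linarith
  -- the matrix M = D - ζ•1
  set M : Matrix (Fin m) (Fin m) ℝ := D - ζ • (1 : Matrix (Fin m) (Fin m) ℝ) with hM
  have hMherm : M.IsHermitian := by
    unfold M
    unfold Matrix.IsHermitian
    rw [conjTranspose_sub, conjTranspose_smul, conjTranspose_one, hD.isHermitian.eq, star_trivial]
  have hMvec : ∀ w : Fin m → ℝ, M *ᵥ w = D *ᵥ w - ζ • w := by
    intro w; rw [hM, sub_mulVec, smul_mulVec, one_mulVec]
  have hMdot : ∀ w : Fin m → ℝ, w ⬝ᵥ (M *ᵥ w) = w ⬝ᵥ (D *ᵥ w) - ζ * (w ⬝ᵥ w) := by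
    intro w; rw [hMvec, dotProduct_sub, dotProduct_smul, smul_eq_mul]
  have hMpd : M.PosDef := by
    refine .of_dotProduct_mulVec_pos hMherm fun {w} hw => ?_
    have h1 := hD.dotProduct_mulVec_pos hw
    have h2 : (0:ℝ) ≤ w ⬝ᵥ w := Finset.sum_nonneg fun j _ => mul_self_nonneg _
    simp only [star_trivial] at h1 ⊢
    rw [hMdot]
    nlinarith
  have hMu : M *ᵥ u = -(L *ᵥ v) := by
    rw [hMvec]
    have := eq1
    ext j
    have h := congrFun eq1 j
    simp only [Pi.add_apply, Pi.sub_apply, Pi.smul_apply, Pi.neg_apply, smul_eq_mul] at *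
    linarith
  have haM : u ⬝ᵥ (M *ᵥ u) = a := by rw [hMdot, ← hnu, ← ha]
  have ha0 : 0 ≤ a := by
    rw [← haM]
    have := hMpd.posSemidef.dotProduct_mulVec_nonneg u
    simpa using this
  -- ψmax bounds
  subst hψmax hρmax
  have hψpos : 0 < ⨆ i, hD.isHermitian.eigenvalues i := by
    obtain ⟨j⟩ := (inferInstance : Nonempty (Fin m))
    exact lt_of_lt_of_le (hD.eigenvalues_pos j)
      (le_ciSup (Set.finite_range _).bddAbove j)
  set ψ : ℝ := ⨆ i, hD.isHermitian.eigenvalues i with hψ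
  set ρ : ℝ := ⨆ i, hR.isHermitian.eigenvalues i with hρ
  have hψζ : 0 < ψ - ζ := by linarith
  have heigM_le : ∀ j, hMherm.eigenvalues j ≤ ψ - ζ := by
    refine eig_le_of_rayleigh M hMherm _ (fun w => ?_)
    have h1 := rayleigh_le_sup D hD.isHermitian w
    have h2 : (0:ℝ) ≤ w ⬝ᵥ w := Finset.sum_nonneg fun j _ => mul_self_nonneg _
    rw [hMdot]
    nlinarith
  -- B1
  have hB1 : lv ≤ (ψ - ζ) * a := by
    have := sq_mulVec_le M hMherm (ψ - ζ) (fun j => (hMpd.eigenvalues_pos j).le) heigM_le u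
    rw [haM] at this
    rw [hMu] at this
    simpa [hlv] using this
  -- B2
  set z : Fin p → ℝ := H *ᵥ v with hz
  set y : Fin p → ℝ := R⁻¹ *ᵥ z with hy
  have hRy : R *ᵥ y = z := by
    rw [hy, mulVec_mulVec, Matrix.mul_nonsing_inv _ hR.det_pos.ne'.isUnit, one_mulVec]
  have hqy : q = y ⬝ᵥ (R *ᵥ y) := by
    rw [hq]
    have h1 : (Hᵀ * R⁻¹ * H) *ᵥ v = Hᵀ *ᵥ y := by
      rw [hy, hz, ← mulVec_mulVec, ← mulVec_mulVec]
    rw [h1, dotProduct_mulVec, vecMul_transpose, ← hz, hRy, dotProduct_comm]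
  have hq0 : 0 ≤ q := by
    rw [hqy]
    have := hR.posSemidef.dotProduct_mulVec_nonneg y
    simpa using this
  have heigR_le : ∀ j, hR.isHermitian.eigenvalues j ≤ ρ :=
    fun j => le_ciSup (Set.finite_range _).bddAbove j
  have hB2 : hvv ≤ ρ * q := by
    have := sq_mulVec_le R hR.isHermitian ρ (fun j => (hR.eigenvalues_pos j).le) heigR_le y
    rw [← hqy] at this
    rw [hRy] at this
    simpa [hhv, hz] using this
  -- B3
  set S : Matrix (Fin m) (Fin m) ℝ := Lᵀ * L + Hᵀ * H with hS
  set hSherm : S.IsHermitian := ((isHermitian_conjTranspose_mul_self L).add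
        (isHermitian_conjTranspose_mul_self H)) with hSh
  have hSv : v ⬝ᵥ (S *ᵥ v) = lv + hvv := by
    rw [hS, add_mulVec, dotProduct_add, ← mulVec_mulVec, ← mulVec_mulVec,
      dotProduct_mulVec v Lᵀ, vecMul_transpose, dotProduct_mulVec v Hᵀ, vecMul_transpose]
  have hSpsd : S.PosSemidef := by
    refine .of_dotProduct_mulVec_nonneg hSherm fun w => ?_
    have h1 : w ⬝ᵥ (S *ᵥ w) = (L *ᵥ w) ⬝ᵥ (L *ᵥ w) + (H *ᵥ w) ⬝ᵥ (H *ᵥ w) := by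
      rw [hS, add_mulVec, dotProduct_add, ← mulVec_mulVec, ← mulVec_mulVec,
        dotProduct_mulVec w Lᵀ, vecMul_transpose, dotProduct_mulVec w Hᵀ, vecMul_transpose]
    simp only [star_trivial]
    rw [h1]
    have g1 : (0:ℝ) ≤ (L *ᵥ w) ⬝ᵥ (L *ᵥ w) := Finset.sum_nonneg fun j _ => mul_self_nonneg _
    have g2 : (0:ℝ) ≤ (H *ᵥ w) ⬝ᵥ (H *ᵥ w) := Finset.sum_nonneg fun j _ => mul_self_nonneg _
    linarith
  have hInf0 : 0 ≤ ⨅ j, hSherm.eigenvalues j :=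
    le_ciInf fun j => hSpsd.eigenvalues_nonneg j
  have hθ2 : θmin ^ 2 = ⨅ j, hSherm.eigenvalues j := by
    rw [hθmin]; exact Real.sq_sqrt hInf0
  have hθ0 : 0 ≤ θmin ^ 2 := by rw [hθ2]; exact hInf0
  have hB3 : θmin ^ 2 * nv ≤ lv + hvv := by
    rw [hθ2, ← hSv, hnv]
    exact inf_le_rayleigh S hSherm v
  -- nv > 0
  have hnvpos : 0 < nv := by
    rcases lt_or_eq_of_le hnv0 with h | h
    · exact h
    · exfalso
      have hveq : v = 0 := dotProduct_self_eq_zero.mp h.symm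
      have haq : a + q = 0 := by rw [hE2, ← h]; ring
      have ha' : a = 0 := le_antisymm (by linarith) ha0
      have hu0 : u = 0 := by
        by_contra hune
        have := hMpd.dotProduct_mulVec_pos hune
        simp only [star_trivial] at this
        rw [haM, ha'] at this
        exact lt_irrefl 0 this
      apply hxne
      rw [hxe, hveq, hu0]
      ext j; cases j <;> rfl
  exact final_combine ζ ψ ρ (θmin ^ 2) a q nv lv hvv hζ hψζ ha0 hq0 hnvpos hE2 hB1 hB2 hB3
end
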